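/- arXiv:2410.07483 — 2 statements merged into one kernel-verified Lean document; each statement's English description precedes it below -/
import Mathlib

section
/- Under randomization, monotonicity, principal ignorability, and the positivity condition, for every z ∈ {1,...,J} and every g ∈ {J−z+1,...,J}: E[Y_z·1(G=g)] = E[(p_{J−g+1}(X) − p_{J−g}(X))·m_z(X)]. -/
open MeasureTheory ProbabilityTheory

noncomputable section

namespace TruncationByDeath

variable {Ω : Type*} {𝒳 : Type*} [MeasurableSpace Ω] [MeasurableSpace 𝒳]

/-- The σ-algebra on `Ω` generated by the covariate map `X`. -/
def mX (X : Ω → 𝒳) : MeasurableSpace Ω := MeasurableSpace.comap X inferInstance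

/-- Real-valued indicator of the event `{Z = z}`. -/
def indic (Z : Ω → ℕ) (z : ℕ) : Ω → ℝ := fun ω => if Z ω = z then 1 else 0

/-- Observed survival status `S := ∑_z 1(Z=z) ⬝ S_z`. -/
def Sobs (J : ℕ) (Z : Ω → ℕ) (S : ℕ → Ω → ℝ) : Ω → ℝ :=
  fun ω => ∑ z ∈ Finset.Icc 1 J, indic Z z ω * S z ω

/-- Observed outcome `Y := ∑_z 1(Z=z) ⬝ Y_z`. -/
def Yobs (J : ℕ) (Z : Ω → ℕ) (Y : ℕ → Ω → ℝ) : Ω → ℝ :=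
  fun ω => ∑ z ∈ Finset.Icc 1 J, indic Z z ω * Y z ω

/-- Principal score `p_z(X) := E[S_z | σ(X)]`, with conventions `p_0 := 0` and `p_{J+1} := 1`. -/
def pscore (P : Measure Ω) (X : Ω → 𝒳) (S : ℕ → Ω → ℝ) (J : ℕ) (z : ℕ) : Ω → ℝ :=
  if z = 0 then fun _ => 0 else if z = J + 1 then fun _ => 1 else P[S z | mX X]

/-- Treatment probability `π_z := P(Z = z)`. -/
def piZ (P : Measure Ω) (Z : Ω → ℕ) (z : ℕ) : ℝ := (P {ω | Z ω = z}).toReal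

/-- Principal stratum variable `G := ∑_{z=1}^J S_z`. -/
def Gsum (J : ℕ) (S : ℕ → Ω → ℝ) : Ω → ℝ := fun ω => ∑ z ∈ Finset.Icc 1 J, S z ω

/-- Real-valued indicator of the event `{G = g}`. -/
def indG (J : ℕ) (S : ℕ → Ω → ℝ) (g : ℕ) : Ω → ℝ :=
  Set.indicator {ω | Gsum J S ω = (g : ℝ)} (fun _ => (1 : ℝ))

/-- Principal score of the stratum `g` : `e_g(X) := E[1(G=g) | σ(X)]`. -/
def eg (P : Measure Ω) (X : Ω → 𝒳) (J : ℕ) (S : ℕ → Ω → ℝ) (g : ℕ) : Ω → ℝ :=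
  P[indG J S g | mX X]

/-- Basic setup: measurability, ranges, values and integrability of the primitives. -/
structure Setup (P : Measure Ω) (J : ℕ) (X : Ω → 𝒳) (Z : Ω → ℕ)
    (S Y : ℕ → Ω → ℝ) : Prop where
  hJ : 2 ≤ J
  hX : Measurable X
  hZ : Measurable Z
  hZr : ∀ ω, Z ω ∈ Finset.Icc 1 J
  hSm : ∀ z, Measurable (S z)
  hS01 : ∀ z ω, S z ω = 0 ∨ S z ω = 1
  hYm : ∀ z, Measurable (Y z)
  hYint : ∀ z, Integrable (Y z) P

/-- Randomization : `Z` is independent of `(X, S_1,…,S_J, Y_1,…,Y_J)` and `π_z > 0` for all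
`z ∈ {1,…,J}`. -/
def Randomization (P : Measure Ω) (J : ℕ) (X : Ω → 𝒳) (Z : Ω → ℕ)
    (S Y : ℕ → Ω → ℝ) : Prop :=
  IndepFun Z (fun ω => (X ω, fun z => S z ω, fun z => Y z ω)) P ∧
    ∀ z ∈ Finset.Icc 1 J, 0 < piZ P Z z

/-- Monotonicity : `S_{z'} ≤ S_z` a.s. whenever `z' ≤ z`. -/
def Monotonicity (P : Measure Ω) (J : ℕ) (S : ℕ → Ω → ℝ) : Prop :=
  ∀ z ∈ Finset.Icc 1 J, ∀ z' ∈ Finset.Icc 1 J, z' ≤ z → ∀ᵐ ω ∂P, S z' ω ≤ S z ω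

/-- Principal ignorability. -/
def PrincipalIgnorability (P : Measure Ω) (J : ℕ) (X : Ω → 𝒳)
    (S Y : ℕ → Ω → ℝ) : Prop :=
  ∀ z ∈ Finset.Icc 1 J, ∀ g ∈ Finset.Icc (J - z + 1) J, ∀ g' ∈ Finset.Icc (J - z + 1) J,
    (fun ω => (P[fun ω' => Y z ω' * indG J S g ω' | mX X]) ω * eg P X J S g' ω)
      =ᵐ[P] fun ω => (P[fun ω' => Y z ω' * indG J S g' ω' | mX X]) ω * eg P X J S g ω

/-- Positivity : the principal scores are uniformly bounded away from zero. -/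
def Positivity (P : Measure Ω) (J : ℕ) (X : Ω → 𝒳) (S : ℕ → Ω → ℝ) : Prop :=
  ∃ c : ℝ, 0 < c ∧ ∀ z ∈ Finset.Icc 1 J, ∀ᵐ ω ∂P, c ≤ pscore P X S J z ω


section AuxLemmas

variable {Ω : Type*} {𝒳 : Type*} [MeasurableSpace Ω] [MeasurableSpace 𝒳]

omit [MeasurableSpace Ω] in
lemma gsum_eq_card (J : ℕ) (S : ℕ → Ω → ℝ) (ω : Ω) (h01 : ∀ k, S k ω = 0 ∨ S k ω = 1) :
    Gsum J S ω = (((Finset.Icc 1 J).filter (fun k => S k ω = 1)).card : ℝ) := by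
  rw [Gsum, ← Finset.sum_boole]
  refine Finset.sum_congr rfl fun k _ => ?_
  rcases h01 k with h | h <;> simp [h]

omit [MeasurableSpace Ω] in
lemma card_le_J (J : ℕ) (S : ℕ → Ω → ℝ) (ω : Ω) :
    ((Finset.Icc 1 J).filter (fun k => S k ω = 1)).card ≤ J := by
  refine le_trans (Finset.card_filter_le _ _) ?_
  simp [Nat.card_Icc]

omit [MeasurableSpace Ω] in
lemma S_one_iff (J z : ℕ) (S : ℕ → Ω → ℝ) (ω : Ω)
    (h01 : ∀ k, S k ω = 0 ∨ S k ω = 1)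
    (hm : ∀ k ∈ Finset.Icc 1 J, ∀ k' ∈ Finset.Icc 1 J, k' ≤ k → S k' ω ≤ S k ω)
    (hz1 : 1 ≤ z) (hzJ : z ≤ J) :
    S z ω = if J - z + 1 ≤ ((Finset.Icc 1 J).filter (fun k => S k ω = 1)).card
      then 1 else 0 := by
  rcases h01 z with h0 | h1
  · rw [h0, if_neg]
    intro hge
    have hsub : (Finset.Icc 1 J).filter (fun k => S k ω = 1) ⊆ Finset.Icc (z+1) J := by
      intro k hk
      simp only [Finset.mem_filter, Finset.mem_Icc] at hk ⊢
      refine ⟨?_, hk.1.2⟩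
      by_contra hlt
      push_neg at hlt
      have := hm z (Finset.mem_Icc.mpr ⟨hz1, hzJ⟩) k
        (Finset.mem_Icc.mpr hk.1) (by omega)
      rw [hk.2, h0] at this; linarith
    have := Finset.card_le_card hsub
    rw [Nat.card_Icc] at this
    omega
  · rw [h1, if_pos]
    have hsub : Finset.Icc z J ⊆ (Finset.Icc 1 J).filter (fun k => S k ω = 1) := by
      intro k hk
      simp only [Finset.mem_Icc] at hk
      simp only [Finset.mem_filter, Finset.mem_Icc]
      refine ⟨⟨by omega, hk.2⟩, ?_⟩
      have hle := hm k (Finset.mem_Icc.mpr ⟨by omega, hk.2⟩) z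
        (Finset.mem_Icc.mpr ⟨hz1, hzJ⟩) hk.1
      rcases h01 k with h | h
      · rw [h, h1] at hle; linarith
      · exact h
    have := Finset.card_le_card hsub
    rw [Nat.card_Icc] at this
    omega

omit [MeasurableSpace Ω] in
lemma indG_eq_card (J g : ℕ) (S : ℕ → Ω → ℝ) (ω : Ω) (h01 : ∀ k, S k ω = 0 ∨ S k ω = 1) :
    indG J S g ω
      = if ((Finset.Icc 1 J).filter (fun k => S k ω = 1)).card = g then 1 else 0 := by
  rw [indG, Set.indicator_apply]
  simp only [Set.mem_setOf_eq, gsum_eq_card J S ω h01, Nat.cast_inj]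

omit [MeasurableSpace Ω] in
lemma sum_indG_eq (J z : ℕ) (S : ℕ → Ω → ℝ) (ω : Ω)
    (h01 : ∀ k, S k ω = 0 ∨ S k ω = 1)
    (hm : ∀ k ∈ Finset.Icc 1 J, ∀ k' ∈ Finset.Icc 1 J, k' ≤ k → S k' ω ≤ S k ω)
    (hz1 : 1 ≤ z) (hzJ : z ≤ J) :
    ∑ g' ∈ Finset.Icc (J - z + 1) J, indG J S g' ω = S z ω := by
  have hNJ := card_le_J J S ω
  rw [S_one_iff J z S ω h01 hm hz1 hzJ]
  calc ∑ g' ∈ Finset.Icc (J - z + 1) J, indG J S g' ω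
      = ∑ g' ∈ Finset.Icc (J - z + 1) J,
          (if ((Finset.Icc 1 J).filter (fun k => S k ω = 1)).card = g' then (1:ℝ) else 0) :=
        Finset.sum_congr rfl fun g' _ => indG_eq_card J g' S ω h01
    _ = if ((Finset.Icc 1 J).filter (fun k => S k ω = 1)).card ∈ Finset.Icc (J - z + 1) J
          then (1:ℝ) else 0 := Finset.sum_ite_eq _ _ _
    _ = _ := by
        simp only [Finset.mem_Icc]
        exact if_congr (by omega) rfl rfl

omit [MeasurableSpace Ω] in
lemma indG_diff (J g : ℕ) (S : ℕ → Ω → ℝ) (ω : Ω)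
    (h01 : ∀ k, S k ω = 0 ∨ S k ω = 1)
    (hm : ∀ k ∈ Finset.Icc 1 J, ∀ k' ∈ Finset.Icc 1 J, k' ≤ k → S k' ω ≤ S k ω)
    (hg1 : 1 ≤ g) (hgJ : g ≤ J) :
    indG J S g ω = S (J - g + 1) ω - (if g = J then 0 else S (J - g) ω) := by
  have hNJ := card_le_J J S ω
  rw [indG_eq_card J g S ω h01, S_one_iff J (J - g + 1) S ω h01 hm (by omega) (by omega)]
  have h1 : J - (J - g + 1) + 1 = g := by omega
  rw [h1]
  by_cases hgJ' : g = J
  · rw [if_pos hgJ']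
    subst hgJ'
    split_ifs <;> first | omega | norm_num
  · rw [if_neg hgJ', S_one_iff J (J - g) S ω h01 hm (by omega) (by omega)]
    have h2 : J - (J - g) + 1 = g + 1 := by omega
    rw [h2]
    split_ifs <;> first | omega | norm_num

omit [MeasurableSpace Ω] in
lemma obs_eq (J z : ℕ) (Z : Ω → ℕ) (S Y : ℕ → Ω → ℝ)
    (hZr : ∀ ω, Z ω ∈ Finset.Icc 1 J) (ω : Ω) :
    Yobs J Z Y ω * Sobs J Z S ω * indic Z z ω = indic Z z ω * (Y z ω * S z ω) := by
  have hY : Yobs J Z Y ω = Y (Z ω) ω := by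
    rw [Yobs, Finset.sum_eq_single_of_mem (Z ω) (hZr ω)
      (fun b _ hb => by simp [indic, if_neg (Ne.symm hb)])]
    simp [indic]
  have hS : Sobs J Z S ω = S (Z ω) ω := by
    rw [Sobs, Finset.sum_eq_single_of_mem (Z ω) (hZr ω)
      (fun b _ hb => by simp [indic, if_neg (Ne.symm hb)])]
    simp [indic]
  rw [hY, hS, indic]
  by_cases h : Z ω = z
  · simp only [h, if_pos rfl]; ring
  · simp [h]

lemma condexp_indic_mul (P : Measure Ω) [IsProbabilityMeasure P]
    (X : Ω → 𝒳) (Z : Ω → ℕ) (S Y : ℕ → Ω → ℝ)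
    (hX : Measurable X) (hZ : Measurable Z) (hSm : ∀ z, Measurable (S z))
    (hS01 : ∀ z ω, S z ω = 0 ∨ S z ω = 1) (hYm : ∀ z, Measurable (Y z))
    (hYint : ∀ z, Integrable (Y z) P)
    (hindep : IndepFun Z (fun ω => (X ω, fun z => S z ω, fun z => Y z ω)) P)
    (z : ℕ) :
    (fun ω => piZ P Z z * (P[fun ω => Y z ω * S z ω | mX X]) ω)
      =ᵐ[P] P[fun ω => indic Z z ω * (Y z ω * S z ω) | mX X] := by
  have hm : mX X ≤ ‹MeasurableSpace Ω› := hX.comap_le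
  have hYS : Integrable (fun ω => Y z ω * S z ω) P := by
    refine (((hYint z).bdd_mul (c := 1) (hSm z).aestronglyMeasurable
      (Filter.Eventually.of_forall fun ω => ?_)).congr
      (Filter.Eventually.of_forall fun ω => mul_comm _ _))
    rcases hS01 z ω with h | h <;> simp [h]
  have hindicm : Measurable (indic Z z) := by
    have : indic Z z = (fun n : ℕ => if n = z then (1:ℝ) else 0) ∘ Z := rfl
    rw [this]
    exact measurable_from_top.comp hZ
  have hf : Integrable (fun ω => indic Z z ω * (Y z ω * S z ω)) P := by
    refine hYS.bdd_mul (c := 1) hindicm.aestronglyMeasurable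
      (Filter.Eventually.of_forall fun ω => ?_)
    by_cases h : Z ω = z <;> simp [indic, h]
  refine ae_eq_condExp_of_forall_setIntegral_eq hm hf
    (fun s _ _ => (integrable_condExp.const_mul _).integrableOn)
    (fun s hs _ => ?_) ?_
  · obtain ⟨A, hA, rfl⟩ := hs
    rw [MeasureTheory.integral_const_mul, setIntegral_condExp hm hYS ⟨A, hA, rfl⟩]
    set W : Ω → 𝒳 × (ℕ → ℝ) × (ℕ → ℝ) := fun ω => (X ω, fun k => S k ω, fun k => Y k ω) with hW
    have hWm : Measurable W :=
      hX.prodMk ((measurable_pi_lambda _ fun k => hSm k).prodMk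
        (measurable_pi_lambda _ fun k => hYm k))
    set f1 : ℕ → ℝ := fun n => if n = z then 1 else 0 with hf1
    set f2 : 𝒳 × (ℕ → ℝ) × (ℕ → ℝ) → ℝ :=
      fun p => A.indicator (fun _ => (1:ℝ)) p.1 * (p.2.2 z * p.2.1 z) with hf2
    have hf1m : Measurable f1 := measurable_from_top
    have hf2m : Measurable f2 := by
      refine (((measurable_const (a := (1:ℝ))).indicator hA).comp measurable_fst).mul ?_
      exact ((measurable_pi_apply z).comp (measurable_snd.comp measurable_snd)).mul
        ((measurable_pi_apply z).comp (measurable_fst.comp measurable_snd))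
    have hInd : IndepFun (f1 ∘ Z) (f2 ∘ W) P := hindep.comp hf1m hf2m
    have hmul := hInd.integral_mul_eq_mul_integral ((hf1m.comp hZ).aestronglyMeasurable)
      ((hf2m.comp hWm).aestronglyMeasurable)
    have e1 : ∫ ω, (f1 ∘ Z) ω ∂P = piZ P Z z := by
      have heq : (f1 ∘ Z) = ({ω | Z ω = z}).indicator (fun _ => (1:ℝ)) := by
        funext ω
        by_cases h : Z ω = z <;> simp [hf1, Set.indicator_apply, h]
      have hzset : MeasurableSet {ω | Z ω = z} := hZ (measurableSet_singleton z)
      rw [heq, integral_indicator_const (1:ℝ) hzset, piZ]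
      simp [Measure.real]
    have e2 : ∫ ω, (f2 ∘ W) ω ∂P = ∫ x in X ⁻¹' A, Y z x * S z x ∂P := by
      rw [← integral_indicator (hX hA)]
      refine integral_congr_ae (Filter.Eventually.of_forall fun ω => ?_)
      by_cases h : X ω ∈ A <;>
        simp [hf2, hW, Set.indicator_apply, h]
    have e3 : ∫ ω, ((f1 ∘ Z) * (f2 ∘ W)) ω ∂P
        = ∫ x in X ⁻¹' A, indic Z z x * (Y z x * S z x) ∂P := by
      rw [← integral_indicator (hX hA)]
      refine integral_congr_ae (Filter.Eventually.of_forall fun ω => ?_)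
      by_cases h : X ω ∈ A <;>
        by_cases h' : Z ω = z <;>
        simp [hf1, hf2, hW, indic, Set.indicator_apply, h, h']
    rw [← e3, hmul, e1, e2]
  · exact AEStronglyMeasurable.const_smul
      (StronglyMeasurable.aestronglyMeasurable stronglyMeasurable_condExp) (piZ P Z z)

end AuxLemmas

/-- Under randomization, monotonicity, principal ignorability and
positivity, for every `z ∈ {1,…,J}` and `g ∈ {J−z+1,…,J}`:
`E[Y_z·1(G=g)] = E[(p_{J−g+1}(X) − p_{J−g}(X)) · m_z(X)]`. -/
theorem statement7 (P : Measure Ω) [IsProbabilityMeasure P] (J : ℕ)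
    (X : Ω → 𝒳) (Z : Ω → ℕ) (S Y : ℕ → Ω → ℝ)
    (hset : Setup P J X Z S Y)
    (hrand : Randomization P J X Z S Y)
    (hmono : Monotonicity P J S)
    (hPI : PrincipalIgnorability P J X S Y)
    (hpos : Positivity P J X S) :
    ∀ z ∈ Finset.Icc 1 J, ∀ g ∈ Finset.Icc (J - z + 1) J,
      ∀ mz : Ω → ℝ, Measurable[mX X] mz →
      ((fun ω => mz ω * piZ P Z z * pscore P X S J z ω)
        =ᵐ[P] P[fun ω => Yobs J Z Y ω * Sobs J Z S ω * indic Z z ω | mX X]) →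
      ∫ ω, Y z ω * indG J S g ω ∂P
        = ∫ ω, (pscore P X S J (J - g + 1) ω - pscore P X S J (J - g) ω) * mz ω ∂P := by
  obtain ⟨hJ2, hX, hZ, hZr, hSm, hS01, hYm, hYint⟩ := hset
  intro z hz g hg mz _ hmz
  have hm : mX X ≤ ‹MeasurableSpace Ω› := hX.comap_le
  obtain ⟨hz1, hzJ⟩ := Finset.mem_Icc.mp hz
  obtain ⟨hg1', hgJ⟩ := Finset.mem_Icc.mp hg
  have hg1 : 1 ≤ g := by omega
  have hpi : 0 < piZ P Z z := hrand.2 z hz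
  -- integrability facts
  have hSint : ∀ k, Integrable (S k) P := fun k => by
    refine Integrable.mono' (integrable_const (1:ℝ)) (hSm k).aestronglyMeasurable
      (Filter.Eventually.of_forall fun ω => ?_)
    rcases hS01 k ω with h | h <;> simp [h]
  have hGm : Measurable (Gsum J S) := by
    apply Finset.measurable_sum
    exact fun k _ => hSm k
  have hGsetm : ∀ g' : ℕ, MeasurableSet {ω | Gsum J S ω = (g' : ℝ)} :=
    fun g' => hGm (measurableSet_singleton _)
  have hindGm : ∀ g' : ℕ, Measurable (indG J S g') :=
    fun g' => measurable_const.indicator (hGsetm g')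
  have hindG01 : ∀ (g' : ℕ) (ω : Ω), indG J S g' ω = 0 ∨ indG J S g' ω = 1 := fun g' ω => by
    rw [indG, Set.indicator_apply]; split_ifs <;> simp
  have hindGint : ∀ g' : ℕ, Integrable (indG J S g') P :=
    fun g' => (integrable_const (1:ℝ)).indicator (hGsetm g')
  have hYind : ∀ g' : ℕ, Integrable (fun ω => Y z ω * indG J S g' ω) P := fun g' => by
    refine (((hYint z).bdd_mul (c := 1) (hindGm g').aestronglyMeasurable
      (Filter.Eventually.of_forall fun ω => ?_)).congr
      (Filter.Eventually.of_forall fun ω => mul_comm _ _))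
    rcases hindG01 g' ω with h | h <;> simp [h]
  have hYS : Integrable (fun ω => Y z ω * S z ω) P := by
    refine (((hYint z).bdd_mul (c := 1) (hSm z).aestronglyMeasurable
      (Filter.Eventually.of_forall fun ω => ?_)).congr
      (Filter.Eventually.of_forall fun ω => mul_comm _ _))
    rcases hS01 z ω with h | h <;> simp [h]
  -- a.e. pointwise monotonicity
  have hmono_ae : ∀ᵐ ω ∂P, ∀ k ∈ Finset.Icc 1 J, ∀ k' ∈ Finset.Icc 1 J,
      k' ≤ k → S k' ω ≤ S k ω := by
    rw [Filter.eventually_all_finset]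
    intro k hk
    rw [Filter.eventually_all_finset]
    intro k' hk'
    by_cases h : k' ≤ k
    · exact (hmono k hk k' hk' h).mono fun ω hω _ => hω
    · exact Filter.Eventually.of_forall fun ω h' => absurd h' h
  have hps : pscore P X S J z = P[S z | mX X] := by
    rw [pscore, if_neg (by omega), if_neg (by omega)]
  set T := Finset.Icc (J - z + 1) J with hT
  have hsum_ae : ∀ᵐ ω ∂P, ∑ g' ∈ T, indG J S g' ω = S z ω :=
    hmono_ae.mono fun ω hω => sum_indG_eq J z S ω (fun k => hS01 k ω) hω hz1 hzJ
  -- ∑ e_{g'} =ᵐ p_z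
  have hsum_eg : (fun ω => ∑ g' ∈ T, eg P X J S g' ω) =ᵐ[P] pscore P X S J z := by
    rw [hps]
    have h1 : (fun ω => ∑ g' ∈ T, eg P X J S g' ω)
        = ∑ g' ∈ T, P[indG J S g' | mX X] := by
      funext ω; exact (Finset.sum_apply _ _ _).symm
    rw [h1]
    refine (condExp_finsetSum (fun g' _ => hindGint g') (mX X)).symm.trans (condExp_congr_ae ?_)
    exact hsum_ae.mono fun ω hω => by simpa [Finset.sum_apply] using hω
  -- ∑ E[Y_z 1(G=g')|X] =ᵐ E[Y_z S_z|X]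
  have hsum_Y : (fun ω => ∑ g' ∈ T, (P[fun ω' => Y z ω' * indG J S g' ω' | mX X]) ω)
      =ᵐ[P] P[fun ω' => Y z ω' * S z ω' | mX X] := by
    have h1 : (fun ω => ∑ g' ∈ T, (P[fun ω' => Y z ω' * indG J S g' ω' | mX X]) ω)
        = ∑ g' ∈ T, P[fun ω' => Y z ω' * indG J S g' ω' | mX X] := by
      funext ω; exact (Finset.sum_apply _ _ _).symm
    rw [h1]
    refine (condExp_finsetSum (fun g' _ => hYind g') (mX X)).symm.trans (condExp_congr_ae ?_)
    refine hsum_ae.mono fun ω hω => ?_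
    simp only [Finset.sum_apply]
    rw [← Finset.mul_sum, hω]
  -- E[Y_z S_z|X] =ᵐ m_z ⬝ p_z
  have hobs_eq : (fun ω => Yobs J Z Y ω * Sobs J Z S ω * indic Z z ω)
      = fun ω => indic Z z ω * (Y z ω * S z ω) :=
    funext fun ω => obs_eq J z Z S Y hZr ω
  rw [hobs_eq] at hmz
  have hB := condexp_indic_mul P X Z S Y hX hZ hSm hS01 hYm hYint hrand.1 z
  have hCE_YS : P[fun ω' => Y z ω' * S z ω' | mX X]
      =ᵐ[P] fun ω => mz ω * pscore P X S J z ω := by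
    filter_upwards [hmz, hB] with ω h1 h2
    have h3 : piZ P Z z * (P[fun ω' => Y z ω' * S z ω' | mX X]) ω
        = piZ P Z z * (mz ω * pscore P X S J z ω) := by
      rw [h2, ← h1]; ring
    exact mul_left_cancel₀ (ne_of_gt hpi) h3
  -- principal ignorability, summed over the strata
  have hPIae : ∀ᵐ ω ∂P, ∀ g' ∈ T,
      (P[fun ω' => Y z ω' * indG J S g ω' | mX X]) ω * eg P X J S g' ω
        = (P[fun ω' => Y z ω' * indG J S g' ω' | mX X]) ω * eg P X J S g ω := by
    rw [Filter.eventually_all_finset]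
    exact fun g' hg' => hPI z hz g hg g' hg'
  obtain ⟨c, hc, hcb⟩ := hpos
  have hkey : ∀ᵐ ω ∂P,
      (P[fun ω' => Y z ω' * indG J S g ω' | mX X]) ω = mz ω * eg P X J S g ω := by
    filter_upwards [hPIae, hsum_eg, hsum_Y, hCE_YS, hcb z hz] with ω h1 h2 h3 h4 h5
    have hsum1 : (P[fun ω' => Y z ω' * indG J S g ω' | mX X]) ω * pscore P X S J z ω
        = (mz ω * pscore P X S J z ω) * eg P X J S g ω := by
      calc (P[fun ω' => Y z ω' * indG J S g ω' | mX X]) ω * pscore P X S J z ω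
          = (P[fun ω' => Y z ω' * indG J S g ω' | mX X]) ω * ∑ g' ∈ T, eg P X J S g' ω := by
            rw [h2]
        _ = ∑ g' ∈ T, (P[fun ω' => Y z ω' * indG J S g ω' | mX X]) ω * eg P X J S g' ω := by
            rw [Finset.mul_sum]
        _ = ∑ g' ∈ T, (P[fun ω' => Y z ω' * indG J S g' ω' | mX X]) ω * eg P X J S g ω :=
            Finset.sum_congr rfl fun g' hg' => h1 g' hg'
        _ = (∑ g' ∈ T, (P[fun ω' => Y z ω' * indG J S g' ω' | mX X]) ω) * eg P X J S g ω := by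
            rw [Finset.sum_mul]
        _ = (mz ω * pscore P X S J z ω) * eg P X J S g ω := by rw [h3, h4]
    have hp0 : pscore P X S J z ω ≠ 0 := ne_of_gt (lt_of_lt_of_le hc h5)
    have h6 : (P[fun ω' => Y z ω' * indG J S g ω' | mX X]) ω * pscore P X S J z ω
        = (mz ω * eg P X J S g ω) * pscore P X S J z ω := by rw [hsum1]; ring
    exact mul_right_cancel₀ hp0 h6
  -- e_g =ᵐ p_{J-g+1} - p_{J-g}
  have hindG_ae : (indG J S g) =ᵐ[P]
      (fun ω => S (J - g + 1) ω - (if g = J then 0 else S (J - g) ω)) :=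
    hmono_ae.mono fun ω hω => indG_diff J g S ω (fun k => hS01 k ω) hω hg1 hgJ
  have hps1 : pscore P X S J (J - g + 1) = P[S (J - g + 1) | mX X] := by
    rw [pscore, if_neg (by omega), if_neg (by omega)]
  have heg : eg P X J S g =ᵐ[P]
      fun ω => pscore P X S J (J - g + 1) ω - pscore P X S J (J - g) ω := by
    by_cases hgJ' : g = J
    · have h0 : pscore P X S J (J - g) = fun _ => (0:ℝ) := by
        rw [pscore, if_pos (by omega)]
      have hfun : (fun ω => S (J - g + 1) ω - (if g = J then (0:ℝ) else S (J - g) ω))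
          = S (J - g + 1) := by
        funext ω; rw [if_pos hgJ', sub_zero]
      refine ((condExp_congr_ae (m := mX X) hindG_ae).trans ?_ : _)
      rw [hfun]
      refine Filter.EventuallyEq.of_eq ?_
      funext ω
      rw [hps1, h0]
      simp
    · have hD : pscore P X S J (J - g) = P[S (J - g) | mX X] := by
        rw [pscore, if_neg (by omega), if_neg (by omega)]
      have hfun : (fun ω => S (J - g + 1) ω - (if g = J then (0:ℝ) else S (J - g) ω))
          = S (J - g + 1) - S (J - g) := by
        funext ω; rw [if_neg hgJ']; rfl
      refine ((condExp_congr_ae (m := mX X) hindG_ae).trans ?_ : _)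
      rw [hfun]
      refine (condExp_sub (hSint (J - g + 1)) (hSint (J - g)) (mX X)).trans ?_
      rw [hps1, hD]
      exact Filter.EventuallyEq.of_eq (funext fun ω => rfl)
  -- conclusion
  calc ∫ ω, Y z ω * indG J S g ω ∂P
      = ∫ ω, (P[fun ω' => Y z ω' * indG J S g ω' | mX X]) ω ∂P :=
        (integral_condExp hm).symm
    _ = ∫ ω, (pscore P X S J (J - g + 1) ω - pscore P X S J (J - g) ω) * mz ω ∂P := by
        refine integral_congr_ae ?_
        filter_upwards [hkey, heg] with ω h1 h2
        rw [h1, h2]; ring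


end TruncationByDeath
end
end

section
/- (Balancing property of principal scores.) Under randomization and the positivity condition, for every g ∈ {1,...,J}, every z ∈ {1,...,J}, and every bounded measurable h : 𝒳 → ℝ, the following three quantities are equal (with the convention that S·1(Z=0)/π_0 := 0 when g = J): E[((p_{J−g+1}(X) − p_{J−g}(X))/p_z(X))·(S·1(Z=z)/π_z)·h(X)], E[(S·1(Z=J−g+1)/π_{J−g+1} − S·1(Z=J−g)/π_{J−g})·h(X)], and E[(p_{J−g+1}(X) − p_{J−g}(X))·h(X)]. If monotonicity additionally holds, then all three quantities equal E[h(X)·1(G=g)], where G := Σ_{z=1}^J S_z. -/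
open MeasureTheory ProbabilityTheory

noncomputable section

namespace TruncationByDeath

variable {Ω : Type*} {𝒳 : Type*} [MeasurableSpace Ω] [MeasurableSpace 𝒳]

/-- Weighted survival term `S·1(Z=w)/π_w`, with the convention that it is `0` for `w = 0`. -/
def wterm (P : Measure Ω) (J : ℕ) (Z : Ω → ℕ) (S : ℕ → Ω → ℝ) (w : ℕ) : Ω → ℝ :=
  if w = 0 then fun _ => 0
  else fun ω => Sobs J Z S ω * indic Z w ω / piZ P Z w

section Aux

set_option linter.unusedSectionVars false

variable {P : Measure Ω} [IsProbabilityMeasure P] {J : ℕ} {X : Ω → 𝒳} {Z : Ω → ℕ}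
  {S Y : ℕ → Ω → ℝ}

lemma integrable_of_bdd {f : Ω → ℝ} (hf : AEStronglyMeasurable f P) {C : ℝ}
    (hb : ∀ᵐ ω ∂P, |f ω| ≤ C) : Integrable f P :=
  Integrable.mono' (integrable_const C) hf (by simpa [Real.norm_eq_abs] using hb)

lemma indepFun_of_comap_le {β γ β' γ' : Type*} [MeasurableSpace β] [MeasurableSpace γ]
    [MeasurableSpace β'] [MeasurableSpace γ'] {f : Ω → β} {g : Ω → γ} {f' : Ω → β'} {g' : Ω → γ'}
    (h : IndepFun f g P)
    (hf : Measurable[MeasurableSpace.comap f inferInstance] f')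
    (hg : Measurable[MeasurableSpace.comap g inferInstance] g') :
    IndepFun f' g' P :=
  ProbabilityTheory.indep_of_indep_of_le_left
    (ProbabilityTheory.indep_of_indep_of_le_right h hg.comap_le) hf.comap_le

lemma measurable_comap_W :
    Measurable[MeasurableSpace.comap (fun ω => (X ω, fun z => S z ω, fun z => Y z ω))
      inferInstance] (fun ω => (X ω, fun z => S z ω, fun z => Y z ω)) :=
  Measurable.of_comap_le le_rfl

lemma measurable_comap_X :
    Measurable[MeasurableSpace.comap (fun ω => (X ω, fun z => S z ω, fun z => Y z ω))
      inferInstance] X :=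
  measurable_fst.comp (measurable_comap_W (X := X) (S := S) (Y := Y))

lemma measurable_comap_S (j : ℕ) :
    Measurable[MeasurableSpace.comap (fun ω => (X ω, fun z => S z ω, fun z => Y z ω))
      inferInstance] (S j) :=
  ((measurable_pi_apply j).comp (measurable_fst.comp measurable_snd)).comp
    (measurable_comap_W (X := X) (S := S) (Y := Y))

lemma mX_le_comap :
    mX X ≤ MeasurableSpace.comap (fun ω => (X ω, fun z => S z ω, fun z => Y z ω))
      inferInstance :=
  Measurable.comap_le (measurable_comap_X (X := X) (S := S) (Y := Y))

lemma measurable_comap_indic (w : ℕ) :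
    Measurable[MeasurableSpace.comap Z inferInstance] (indic Z w) := by
  have hs : MeasurableSet[MeasurableSpace.comap Z inferInstance] {ω | Z ω = w} :=
    ⟨{w}, measurableSet_singleton w, rfl⟩
  exact Measurable.ite hs measurable_const measurable_const

lemma measurable_indic (hZ : Measurable Z) (w : ℕ) : Measurable (indic Z w) :=
  Measurable.ite (hZ (measurableSet_singleton w)) measurable_const measurable_const

lemma integral_indic (hZ : Measurable Z) (w : ℕ) : ∫ ω, indic Z w ω ∂P = piZ P Z w := by
  have hs : MeasurableSet {ω | Z ω = w} := hZ (measurableSet_singleton w)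
  have h : (fun ω => indic Z w ω) = Set.indicator {ω | Z ω = w} (fun _ => (1 : ℝ)) := by
    funext ω
    simp [indic, Set.indicator_apply, Set.mem_setOf_eq]
  rw [h]
  exact (integral_indicator_one (μ := P) hs).trans (by simp [piZ, measureReal_def])

lemma indep_int (hZ : Measurable Z)
    (hrand : IndepFun Z (fun ω => (X ω, fun z => S z ω, fun z => Y z ω)) P)
    (w : ℕ) {F : Ω → ℝ}
    (hF : Measurable[MeasurableSpace.comap (fun ω => (X ω, fun z => S z ω, fun z => Y z ω))
      inferInstance] F)
    (hFi : Integrable F P) :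
    ∫ ω, indic Z w ω * F ω ∂P = piZ P Z w * ∫ ω, F ω ∂P := by
  have h1 : IndepFun (indic Z w) F P :=
    indepFun_of_comap_le hrand (measurable_comap_indic w) hF
  have hii : Integrable (indic Z w) P :=
    integrable_of_bdd (measurable_indic hZ w).aestronglyMeasurable (C := 1)
      (Filter.Eventually.of_forall fun ω => by unfold indic; split <;> norm_num)
  have h2 := h1.integral_mul_eq_mul_integral hii.aestronglyMeasurable hFi.aestronglyMeasurable
  have h3 : ∫ ω, indic Z w ω * F ω ∂P = ∫ ω, (indic Z w * F) ω ∂P := rfl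
  rw [h3, h2, integral_indic hZ w]

lemma tower (hX : Measurable X) {w f : Ω → ℝ} (hwm : StronglyMeasurable[mX X] w)
    {Cw : ℝ} (hwb : ∀ᵐ ω ∂P, |w ω| ≤ Cw) (hf : Integrable f P) :
    ∫ ω, w ω * f ω ∂P = ∫ ω, w ω * (P[f|mX X]) ω ∂P := by
  have hm : mX X ≤ (inferInstance : MeasurableSpace Ω) := Measurable.comap_le hX
  have hwf : Integrable (w * f) P :=
    Integrable.bdd_mul hf ((hwm.mono hm).aestronglyMeasurable)
      (by simpa [Real.norm_eq_abs] using hwb)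
  have h2 : P[w * f|mX X] =ᵐ[P] w * P[f|mX X] :=
    condExp_mul_of_stronglyMeasurable_left hwm hwf hf
  calc ∫ ω, w ω * f ω ∂P = ∫ ω, (P[w * f|mX X]) ω ∂P := (integral_condExp hm).symm
    _ = ∫ ω, (w * P[f|mX X]) ω ∂P := integral_congr_ae h2
    _ = ∫ ω, w ω * (P[f|mX X]) ω ∂P := rfl

end Aux

section Comb

set_option linter.unusedSectionVars false

variable {J : ℕ} {S : ℕ → Ω → ℝ} {ω : Ω}

lemma gsum_ge (h01 : ∀ z, S z ω = 0 ∨ S z ω = 1)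
    (hmono : ∀ z₁ ∈ Finset.Icc 1 J, ∀ z₂ ∈ Finset.Icc 1 J, z₂ ≤ z₁ → S z₂ ω ≤ S z₁ ω)
    {z : ℕ} (hz : z ∈ Finset.Icc 1 J) (hz1 : S z ω = 1) :
    ((J - z + 1 : ℕ) : ℝ) ≤ Gsum J S ω := by
  rw [Finset.mem_Icc] at hz
  have hsub : Finset.Icc z J ⊆ Finset.Icc 1 J := by
    intro x hx
    rw [Finset.mem_Icc] at hx ⊢
    omega
  have h1 : ∀ x ∈ Finset.Icc z J, S x ω = 1 := by
    intro x hx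
    rw [Finset.mem_Icc] at hx
    have hle := hmono x (Finset.mem_Icc.mpr ⟨by omega, hx.2⟩) z
      (Finset.mem_Icc.mpr ⟨hz.1, hz.2⟩) hx.1
    rcases h01 x with h | h
    · rw [hz1] at hle; rw [h] at hle; norm_num at hle
    · exact h
  have h2 : ((J - z + 1 : ℕ) : ℝ) = ∑ x ∈ Finset.Icc z J, S x ω := by
    rw [Finset.sum_congr rfl h1, Finset.sum_const, Nat.card_Icc]
    have h3 : J + 1 - z = J - z + 1 := by omega
    rw [h3]
    push_cast
    ring
  rw [h2]
  exact Finset.sum_le_sum_of_subset_of_nonneg hsub fun x hx _ => by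
    rcases h01 x with h | h <;> rw [h] <;> norm_num

lemma gsum_le (h01 : ∀ z, S z ω = 0 ∨ S z ω = 1)
    (hmono : ∀ z₁ ∈ Finset.Icc 1 J, ∀ z₂ ∈ Finset.Icc 1 J, z₂ ≤ z₁ → S z₂ ω ≤ S z₁ ω)
    {z : ℕ} (hz : z ∈ Finset.Icc 1 J) (hz0 : S z ω = 0) :
    Gsum J S ω ≤ ((J - z : ℕ) : ℝ) := by
  rw [Finset.mem_Icc] at hz
  have h1 : Gsum J S ω ≤ ∑ x ∈ Finset.Icc 1 J, (if z < x then (1 : ℝ) else 0) := by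
    apply Finset.sum_le_sum
    intro x hx
    rw [Finset.mem_Icc] at hx
    by_cases hxz : z < x
    · simp only [if_pos hxz]
      rcases h01 x with h | h <;> rw [h] <;> norm_num
    · simp only [if_neg hxz]
      have hle := hmono z (Finset.mem_Icc.mpr ⟨hz.1, hz.2⟩) x
        (Finset.mem_Icc.mpr ⟨hx.1, by omega⟩) (by omega)
      rw [hz0] at hle
      exact hle
  have h2 : ∑ x ∈ Finset.Icc 1 J, (if z < x then (1 : ℝ) else 0)
      = ((J - z : ℕ) : ℝ) := by
    rw [Finset.sum_boole]
    congr 1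
    have h3 : Finset.filter (fun x => z < x) (Finset.Icc 1 J) = Finset.Icc (z + 1) J := by
      ext x
      simp only [Finset.mem_filter, Finset.mem_Icc]
      omega
    rw [h3, Nat.card_Icc]
    omega
  linarith

lemma gsum_le_J (h01 : ∀ z, S z ω = 0 ∨ S z ω = 1) : Gsum J S ω ≤ (J : ℝ) := by
  have h1 : Gsum J S ω ≤ ∑ _x ∈ Finset.Icc 1 J, (1 : ℝ) := by
    apply Finset.sum_le_sum
    intro x _
    rcases h01 x with h | h <;> rw [h] <;> norm_num
  simpa [Nat.card_Icc] using h1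

lemma strat_indicator (hJ : 1 ≤ J) {g : ℕ} (hg1 : 1 ≤ g) (hgJ : g ≤ J)
    (h01 : ∀ z, S z ω = 0 ∨ S z ω = 1)
    (hmono : ∀ z₁ ∈ Finset.Icc 1 J, ∀ z₂ ∈ Finset.Icc 1 J, z₂ ≤ z₁ → S z₂ ω ≤ S z₁ ω) :
    S (J - g + 1) ω - (if J - g = 0 then 0 else S (J - g) ω) = indG J S g ω := by
  set a := J - g + 1 with ha
  set b := J - g with hb
  have haI : a ∈ Finset.Icc 1 J := Finset.mem_Icc.mpr ⟨by omega, by omega⟩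
  have hindG : indG J S g ω = if Gsum J S ω = (g : ℝ) then 1 else 0 := by
    simp [indG, Set.indicator_apply, Set.mem_setOf_eq]
  rcases h01 a with hSa | hSa
  · have hge := gsum_le h01 hmono haI hSa
    have hJa : (J - a : ℕ) = g - 1 := by omega
    have hlt : Gsum J S ω < (g : ℝ) := by
      rw [hJa] at hge
      have h4 : ((g - 1 : ℕ) : ℝ) < (g : ℝ) := by
        exact_mod_cast (by omega : (g - 1 : ℕ) < g)
      linarith
    have hSb0 : (if b = 0 then (0 : ℝ) else S b ω) = 0 := by
      by_cases hb0 : b = 0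
      · simp [hb0]
      · simp only [if_neg hb0]
        have hbI : b ∈ Finset.Icc 1 J := Finset.mem_Icc.mpr ⟨by omega, by omega⟩
        have hle := hmono a haI b hbI (by omega)
        rw [hSa] at hle
        rcases h01 b with h | h
        · exact h
        · rw [h] at hle; norm_num at hle
    rw [hSa, hSb0, hindG, if_neg (fun hc => absurd hc (by linarith))]
    ring
  · have hge := gsum_ge h01 hmono haI hSa
    have hJa : (J - a + 1 : ℕ) = g := by omega
    rw [hJa] at hge
    by_cases hb0 : b = 0
    · have hgJ' : g = J := by omega
      have hle := gsum_le_J (J := J) (S := S) (ω := ω) h01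
      have heq : Gsum J S ω = (g : ℝ) := le_antisymm (by rw [hgJ']; exact_mod_cast hle) hge
      rw [hSa, if_pos hb0, hindG, if_pos heq]
      ring
    · have hbI : b ∈ Finset.Icc 1 J := Finset.mem_Icc.mpr ⟨by omega, by omega⟩
      rcases h01 b with hSb | hSb
      · have hle := gsum_le h01 hmono hbI hSb
        have hJb : (J - b : ℕ) = g := by omega
        rw [hJb] at hle
        have heq : Gsum J S ω = (g : ℝ) := le_antisymm hle hge
        rw [hSa, if_neg hb0, hSb, hindG, if_pos heq]
        ring
      · have hge' := gsum_ge h01 hmono hbI hSb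
        have hJb : (J - b + 1 : ℕ) = g + 1 := by omega
        rw [hJb] at hge'
        have hne : Gsum J S ω ≠ (g : ℝ) := by
          intro hc
          rw [hc] at hge'
          have h5 : ((g + 1 : ℕ) : ℝ) = (g : ℝ) + 1 := by push_cast; ring
          rw [h5] at hge'
          linarith
        rw [hSa, if_neg hb0, hSb, hindG, if_neg hne]
        ring

end Comb


/-- **balancing property of principal scores.** Under randomization and
positivity, for every `g, z ∈ {1,…,J}` and every bounded measurable `h`, the three displayed
expectations coincide; if monotonicity additionally holds, they all equal
`E[h(X)·1(G=g)]`. -/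
theorem statement8 (P : Measure Ω) [IsProbabilityMeasure P] (J : ℕ)
    (X : Ω → 𝒳) (Z : Ω → ℕ) (S Y : ℕ → Ω → ℝ)
    (hset : Setup P J X Z S Y)
    (hrand : Randomization P J X Z S Y)
    (hpos : Positivity P J X S) :
    ∀ g ∈ Finset.Icc 1 J, ∀ z ∈ Finset.Icc 1 J, ∀ h : 𝒳 → ℝ,
      Measurable h → (∃ C, ∀ x, |h x| ≤ C) →
      (∫ ω, ((pscore P X S J (J - g + 1) ω - pscore P X S J (J - g) ω) / pscore P X S J z ω)
          * (Sobs J Z S ω * indic Z z ω / piZ P Z z) * h (X ω) ∂P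
        = ∫ ω, (wterm P J Z S (J - g + 1) ω - wterm P J Z S (J - g) ω) * h (X ω) ∂P) ∧
      (∫ ω, ((pscore P X S J (J - g + 1) ω - pscore P X S J (J - g) ω) / pscore P X S J z ω)
          * (Sobs J Z S ω * indic Z z ω / piZ P Z z) * h (X ω) ∂P
        = ∫ ω, (pscore P X S J (J - g + 1) ω - pscore P X S J (J - g) ω) * h (X ω) ∂P) ∧
      (Monotonicity P J S →
        ∫ ω, (pscore P X S J (J - g + 1) ω - pscore P X S J (J - g) ω) * h (X ω) ∂P
          = ∫ ω, h (X ω) * indG J S g ω ∂P) := by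
  classical
  obtain ⟨hindep, hpi⟩ := hrand
  obtain ⟨c, hc0, hcpos⟩ := hpos
  intro g hgI z hzI h hmh hCex
  obtain ⟨C0, hC0⟩ := hCex
  set C : ℝ := max C0 0 with hCdef
  have hC : ∀ x, |h x| ≤ C := fun x => (hC0 x).trans (le_max_left _ _)
  have hCnn : 0 ≤ C := le_max_right _ _
  rw [Finset.mem_Icc] at hgI hzI
  have hm : mX X ≤ (inferInstance : MeasurableSpace Ω) := Measurable.comap_le hset.hX
  -- basic measurability
  have hhm : Measurable[mX X] fun ω => h (X ω) :=
    hmh.comp (Measurable.of_comap_le le_rfl)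
  have hhW : Measurable[MeasurableSpace.comap
      (fun ω => (X ω, fun z => S z ω, fun z => Y z ω)) inferInstance] fun ω => h (X ω) :=
    hmh.comp (measurable_comap_X (X := X) (S := S) (Y := Y))
  have hhint : Integrable (fun ω => h (X ω)) P :=
    integrable_of_bdd (hmh.comp hset.hX).aestronglyMeasurable
      (Filter.Eventually.of_forall fun ω => hC (X ω))
  have hSb : ∀ j ω, |S j ω| ≤ 1 := fun j ω => by
    rcases hset.hS01 j ω with h' | h' <;> rw [h'] <;> norm_num
  have hSint : ∀ j, Integrable (S j) P := fun j =>
    integrable_of_bdd (hset.hSm j).aestronglyMeasurable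
      (Filter.Eventually.of_forall (hSb j))
  have hp_meas : ∀ w, Measurable[mX X] (pscore P X S J w) := by
    intro w
    unfold pscore
    split_ifs with h1 h2
    · exact measurable_const
    · exact measurable_const
    · exact (stronglyMeasurable_condExp (m := mX X)).measurable
  have hp_bnd : ∀ w, ∀ᵐ ω ∂P, 0 ≤ pscore P X S J w ω ∧ pscore P X S J w ω ≤ 1 := by
    intro w
    unfold pscore
    split_ifs with h1 h2
    · exact Filter.Eventually.of_forall fun ω => by norm_num
    · exact Filter.Eventually.of_forall fun ω => by norm_num
    · have h0 : 0 ≤ᵐ[P] P[S w|mX X] :=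
        condExp_nonneg (Filter.Eventually.of_forall fun ω => by
          rcases hset.hS01 w ω with h' | h' <;> rw [h'] <;> norm_num)
      have h1' : P[S w|mX X] ≤ᵐ[P] P[(fun _ => (1 : ℝ))|mX X] :=
        condExp_mono (hSint w) (integrable_const 1)
          (Filter.Eventually.of_forall fun ω => by
            rcases hset.hS01 w ω with h' | h' <;> rw [h'] <;> norm_num)
      have h2' : P[(fun _ => (1 : ℝ))|mX X] = fun _ => (1 : ℝ) := condExp_const hm 1
      filter_upwards [h0, h1'] with ω hω0 hω1
      refine ⟨hω0, ?_⟩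
      rw [h2'] at hω1
      exact hω1
  -- collapse of the observed survival on {Z = w}
  have hcollapse : ∀ w, 1 ≤ w → w ≤ J → ∀ ω,
      Sobs J Z S ω * indic Z w ω = S w ω * indic Z w ω := by
    intro w h1 h2 ω
    by_cases hZω : Z ω = w
    · have hiw : indic Z w ω = 1 := by simp [indic, hZω]
      have hSo : Sobs J Z S ω = S w ω := by
        unfold Sobs
        rw [Finset.sum_eq_single w]
        · simp [indic, hZω]
        · intro b hb hbw
          have hz : indic Z b ω = 0 := by
            simp only [indic]
            rw [hZω]
            exact if_neg (Ne.symm hbw)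
          rw [hz, zero_mul]
        · intro hw
          exact absurd (Finset.mem_Icc.mpr ⟨h1, h2⟩) hw
      rw [hiw, hSo]
    · have hz : indic Z w ω = 0 := by simp [indic, hZω]
      rw [hz, mul_zero, mul_zero]
  -- main weighted-integral identity
  have hmain : ∀ w, 1 ≤ w → w ≤ J → ∀ G : Ω → ℝ,
      Measurable[MeasurableSpace.comap
        (fun ω => (X ω, fun z => S z ω, fun z => Y z ω)) inferInstance] G →
      Integrable G P →
      ∫ ω, Sobs J Z S ω * indic Z w ω / piZ P Z w * G ω ∂P = ∫ ω, S w ω * G ω ∂P := by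
    intro w h1 h2 G hGm hGi
    have hπ : 0 < piZ P Z w := hpi w (Finset.mem_Icc.mpr ⟨h1, h2⟩)
    have hF : Measurable[MeasurableSpace.comap
        (fun ω => (X ω, fun z => S z ω, fun z => Y z ω)) inferInstance]
        fun ω => S w ω * G ω :=
      (measurable_comap_S (X := X) (Y := Y) w).mul hGm
    have hFi : Integrable (fun ω => S w ω * G ω) P :=
      Integrable.bdd_mul hGi (hset.hSm w).aestronglyMeasurable
        (Filter.Eventually.of_forall fun ω => by
          simpa [Real.norm_eq_abs] using hSb w ω)
    have e1 : ∫ ω, Sobs J Z S ω * indic Z w ω / piZ P Z w * G ω ∂P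
        = ∫ ω, indic Z w ω * (S w ω * G ω) * (piZ P Z w)⁻¹ ∂P := by
      apply integral_congr_ae
      apply Filter.Eventually.of_forall
      intro ω
      have hc' := hcollapse w h1 h2 ω
      calc Sobs J Z S ω * indic Z w ω / piZ P Z w * G ω
          = Sobs J Z S ω * indic Z w ω * G ω * (piZ P Z w)⁻¹ := by ring
        _ = S w ω * indic Z w ω * G ω * (piZ P Z w)⁻¹ := by rw [hc']
        _ = indic Z w ω * (S w ω * G ω) * (piZ P Z w)⁻¹ := by ring
    rw [e1, integral_mul_const, indep_int hset.hZ hindep w hF hFi]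
    rw [mul_comm (piZ P Z w), mul_assoc, mul_inv_cancel₀ (ne_of_gt hπ), mul_one]
  -- conditioning identity : ∫ S_w h(X) = ∫ p_w h(X)  for 1 ≤ w ≤ J
  have hSh : ∀ w, 1 ≤ w → w ≤ J →
      ∫ ω, S w ω * h (X ω) ∂P = ∫ ω, pscore P X S J w ω * h (X ω) ∂P := by
    intro w h1 h2
    have hw0 : w ≠ 0 := by omega
    have hwJ : w ≠ J + 1 := by omega
    have hps : pscore P X S J w = P[S w|mX X] := by
      simp [pscore, hw0, hwJ]
    have e1 : ∫ ω, S w ω * h (X ω) ∂P = ∫ ω, h (X ω) * S w ω ∂P := by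
      apply integral_congr_ae
      exact Filter.Eventually.of_forall fun ω => by ring
    rw [e1, tower hset.hX hhm.stronglyMeasurable
      (Filter.Eventually.of_forall fun ω => hC (X ω)) (hSint w), hps]
    apply integral_congr_ae
    exact Filter.Eventually.of_forall fun ω => by ring
  -- integral of wterm w * h(X)
  have hph_int : ∀ w, Integrable (fun ω => pscore P X S J w ω * h (X ω)) P := by
    intro w
    apply integrable_of_bdd
      (((hp_meas w).mono hm le_rfl).mul (hmh.comp hset.hX)).aestronglyMeasurable (C := C)
    filter_upwards [hp_bnd w] with ω h1
    rw [Pi.mul_apply, Function.comp_apply, abs_mul]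
    have hp1 : |pscore P X S J w ω| ≤ 1 := abs_le.mpr ⟨by linarith [h1.1], h1.2⟩
    calc |pscore P X S J w ω| * |h (X ω)| ≤ 1 * C :=
          mul_le_mul hp1 (hC (X ω)) (abs_nonneg _) one_pos.le
      _ = C := one_mul C
  have hSobs_m : Measurable (Sobs J Z S) := by
    unfold Sobs
    exact Finset.measurable_sum _ fun i _ => (measurable_indic hset.hZ i).mul (hset.hSm i)
  have hSobs_b : ∀ ω, |Sobs J Z S ω| ≤ (J : ℝ) := by
    intro ω
    calc |Sobs J Z S ω| ≤ ∑ i ∈ Finset.Icc 1 J, |indic Z i ω * S i ω| :=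
          Finset.abs_sum_le_sum_abs _ _
      _ ≤ ∑ _i ∈ Finset.Icc 1 J, (1 : ℝ) := by
          apply Finset.sum_le_sum
          intro i _
          rw [abs_mul]
          have hi : |indic Z i ω| ≤ 1 := by
            simp only [indic]
            split <;> norm_num
          calc |indic Z i ω| * |S i ω| ≤ 1 * 1 :=
                mul_le_mul hi (hSb i ω) (abs_nonneg _) one_pos.le
            _ = 1 := one_mul 1
      _ = (J : ℝ) := by simp [Nat.card_Icc]
  have hwh_int : ∀ w, w ≤ J → Integrable (fun ω => wterm P J Z S w ω * h (X ω)) P := by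
    intro w hwJ
    rcases Nat.eq_zero_or_pos w with hw0 | hw1
    · subst hw0
      have e : (fun ω => wterm P J Z S 0 ω * h (X ω)) = fun _ => (0 : ℝ) := by
        funext ω
        simp [wterm]
      rw [e]
      exact integrable_const 0
    · have hw0 : w ≠ 0 := by omega
      have hπ : 0 < piZ P Z w := hpi w (Finset.mem_Icc.mpr ⟨hw1, hwJ⟩)
      have hwm : Measurable (wterm P J Z S w) := by
        unfold wterm
        rw [if_neg hw0]
        exact (hSobs_m.mul (measurable_indic hset.hZ w)).div measurable_const
      apply integrable_of_bdd (hwm.mul (hmh.comp hset.hX)).aestronglyMeasurable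
        (C := (J : ℝ) / piZ P Z w * C)
      apply Filter.Eventually.of_forall
      intro ω
      have hww : wterm P J Z S w ω = Sobs J Z S ω * indic Z w ω / piZ P Z w := by
        simp [wterm, hw0]
      rw [Pi.mul_apply, Function.comp_apply, hww, abs_mul, abs_div, abs_mul, abs_of_pos hπ]
      have hi : |indic Z w ω| ≤ 1 := by
        simp only [indic]
        split <;> norm_num
      have h1 : |Sobs J Z S ω| * |indic Z w ω| ≤ (J : ℝ) * 1 :=
        mul_le_mul (hSobs_b ω) hi (abs_nonneg _) (Nat.cast_nonneg J)
      have h2 : |Sobs J Z S ω| * |indic Z w ω| / piZ P Z w ≤ (J : ℝ) / piZ P Z w := by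
        gcongr
        linarith
      exact mul_le_mul h2 (hC (X ω)) (abs_nonneg _) (by positivity)
  have hwterm_eq : ∀ w, w ≤ J →
      ∫ ω, wterm P J Z S w ω * h (X ω) ∂P
        = ∫ ω, pscore P X S J w ω * h (X ω) ∂P := by
    intro w hwJ
    rcases Nat.eq_zero_or_pos w with hw0 | hw1
    · subst hw0
      have e1 : (fun ω => wterm P J Z S 0 ω * h (X ω)) = fun _ => (0 : ℝ) := by
        funext ω; simp [wterm]
      have e2 : (fun ω => pscore P X S J 0 ω * h (X ω)) = fun _ => (0 : ℝ) := by
        funext ω; simp [pscore]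
      rw [e1, e2]
    · have hw0 : w ≠ 0 := by omega
      have e1 : ∫ ω, wterm P J Z S w ω * h (X ω) ∂P
          = ∫ ω, Sobs J Z S ω * indic Z w ω / piZ P Z w * h (X ω) ∂P := by
        apply integral_congr_ae
        apply Filter.Eventually.of_forall
        intro ω
        simp [wterm, hw0]
      rw [e1, hmain w hw1 hwJ _ hhW hhint, hSh w hw1 hwJ]
  -- the key identity (second claim)
  have hzpos : ∀ᵐ ω ∂P, c ≤ pscore P X S J z ω :=
    hcpos z (Finset.mem_Icc.mpr ⟨hzI.1, hzI.2⟩)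
  have hGm_m : Measurable[mX X] fun ω =>
      (pscore P X S J (J - g + 1) ω - pscore P X S J (J - g) ω) / pscore P X S J z ω
        * h (X ω) :=
    (((hp_meas (J - g + 1)).sub (hp_meas (J - g))).div (hp_meas z)).mul hhm
  have hGb : ∀ᵐ ω ∂P, |(pscore P X S J (J - g + 1) ω - pscore P X S J (J - g) ω)
      / pscore P X S J z ω * h (X ω)| ≤ 2 / c * C := by
    filter_upwards [hp_bnd (J - g + 1), hp_bnd (J - g), hzpos] with ω h1 h2 h3
    have hq : 0 < pscore P X S J z ω := lt_of_lt_of_le hc0 h3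
    rw [abs_mul, abs_div]
    have hΔ : |pscore P X S J (J - g + 1) ω - pscore P X S J (J - g) ω| ≤ 2 :=
      abs_le.mpr ⟨by linarith [h1.1, h2.2], by linarith [h1.2, h2.1]⟩
    have hqa : c ≤ |pscore P X S J z ω| := by rwa [abs_of_pos hq]
    have hdd : |pscore P X S J (J - g + 1) ω - pscore P X S J (J - g) ω|
        / |pscore P X S J z ω| ≤ 2 / c :=
      div_le_div₀ (by norm_num) hΔ hc0 hqa
    exact mul_le_mul hdd (hC (X ω)) (abs_nonneg _) (by positivity)
  have hGm : Measurable fun ω =>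
      (pscore P X S J (J - g + 1) ω - pscore P X S J (J - g) ω) / pscore P X S J z ω
        * h (X ω) := hGm_m.mono hm le_rfl
  have hGi : Integrable (fun ω =>
      (pscore P X S J (J - g + 1) ω - pscore P X S J (J - g) ω) / pscore P X S J z ω
        * h (X ω)) P := integrable_of_bdd hGm.aestronglyMeasurable hGb
  have hGW : Measurable[MeasurableSpace.comap
      (fun ω => (X ω, fun z => S z ω, fun z => Y z ω)) inferInstance] fun ω =>
      (pscore P X S J (J - g + 1) ω - pscore P X S J (J - g) ω) / pscore P X S J z ω
        * h (X ω) := hGm_m.mono (mX_le_comap (X := X) (S := S) (Y := Y)) le_rfl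
  have hz0 : z ≠ 0 := by omega
  have hzJ1 : z ≠ J + 1 := by omega
  have hpsz : pscore P X S J z = P[S z|mX X] := by simp [pscore, hz0, hzJ1]
  have hkey : ∫ ω, (pscore P X S J (J - g + 1) ω - pscore P X S J (J - g) ω)
        / pscore P X S J z ω * (Sobs J Z S ω * indic Z z ω / piZ P Z z) * h (X ω) ∂P
      = ∫ ω, (pscore P X S J (J - g + 1) ω - pscore P X S J (J - g) ω) * h (X ω) ∂P := by
    have e0 : ∫ ω, (pscore P X S J (J - g + 1) ω - pscore P X S J (J - g) ω)
          / pscore P X S J z ω * (Sobs J Z S ω * indic Z z ω / piZ P Z z) * h (X ω) ∂P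
        = ∫ ω, Sobs J Z S ω * indic Z z ω / piZ P Z z *
            ((pscore P X S J (J - g + 1) ω - pscore P X S J (J - g) ω)
              / pscore P X S J z ω * h (X ω)) ∂P := by
      apply integral_congr_ae
      exact Filter.Eventually.of_forall fun ω => by ring
    have e1 := hmain z hzI.1 hzI.2 _ hGW hGi
    have e2 : ∫ ω, S z ω *
          ((pscore P X S J (J - g + 1) ω - pscore P X S J (J - g) ω)
            / pscore P X S J z ω * h (X ω)) ∂P
        = ∫ ω, ((pscore P X S J (J - g + 1) ω - pscore P X S J (J - g) ω)
            / pscore P X S J z ω * h (X ω)) * S z ω ∂P := by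
      apply integral_congr_ae
      exact Filter.Eventually.of_forall fun ω => by ring
    have e3 := tower (P := P) hset.hX hGm_m.stronglyMeasurable hGb (hSint z)
    have e4 : ∫ ω, ((pscore P X S J (J - g + 1) ω - pscore P X S J (J - g) ω)
            / pscore P X S J z ω * h (X ω)) * (P[S z|mX X]) ω ∂P
        = ∫ ω, (pscore P X S J (J - g + 1) ω - pscore P X S J (J - g) ω) * h (X ω) ∂P := by
      rw [← hpsz]
      apply integral_congr_ae
      filter_upwards [hzpos] with ω hω
      have hq : pscore P X S J z ω ≠ 0 := ne_of_gt (lt_of_lt_of_le hc0 hω)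
      field_simp
    exact e0.trans (e1.trans (e2.trans (e3.trans e4)))
  have haJ : J - g + 1 ≤ J := by omega
  have hbJ : J - g ≤ J := by omega
  refine ⟨?_, hkey, ?_⟩
  · -- first claim
    have hsplitw : ∫ ω, (wterm P J Z S (J - g + 1) ω - wterm P J Z S (J - g) ω)
          * h (X ω) ∂P
        = ∫ ω, wterm P J Z S (J - g + 1) ω * h (X ω) ∂P
          - ∫ ω, wterm P J Z S (J - g) ω * h (X ω) ∂P := by
      rw [← integral_sub (hwh_int _ haJ) (hwh_int _ hbJ)]
      apply integral_congr_ae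
      exact Filter.Eventually.of_forall fun ω => by ring
    have hsplitp : ∫ ω, (pscore P X S J (J - g + 1) ω - pscore P X S J (J - g) ω)
          * h (X ω) ∂P
        = ∫ ω, pscore P X S J (J - g + 1) ω * h (X ω) ∂P
          - ∫ ω, pscore P X S J (J - g) ω * h (X ω) ∂P := by
      rw [← integral_sub (hph_int _) (hph_int _)]
      apply integral_congr_ae
      exact Filter.Eventually.of_forall fun ω => by ring
    rw [hkey, hsplitw, hsplitp, hwterm_eq _ haJ, hwterm_eq _ hbJ]
  · -- third claim
    intro hMono
    have hmono_ae : ∀ᵐ ω ∂P, ∀ z₁ ∈ Finset.Icc 1 J, ∀ z₂ ∈ Finset.Icc 1 J,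
        z₂ ≤ z₁ → S z₂ ω ≤ S z₁ ω := by
      have key : ∀ z₁ z₂ : ℕ, ∀ᵐ ω ∂P,
          z₁ ∈ Finset.Icc 1 J → z₂ ∈ Finset.Icc 1 J → z₂ ≤ z₁ → S z₂ ω ≤ S z₁ ω := by
        intro z₁ z₂
        by_cases h1 : z₁ ∈ Finset.Icc 1 J
        · by_cases h2 : z₂ ∈ Finset.Icc 1 J
          · by_cases h3 : z₂ ≤ z₁
            · filter_upwards [hMono z₁ h1 z₂ h2 h3] with ω hω
              exact fun _ _ _ => hω
            · exact Filter.Eventually.of_forall fun ω _ _ hc' => absurd hc' h3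
          · exact Filter.Eventually.of_forall fun ω _ hc' => absurd hc' h2
        · exact Filter.Eventually.of_forall fun ω hc' => absurd hc' h1
      have := ae_all_iff.mpr fun z₁ => ae_all_iff.mpr fun z₂ => key z₁ z₂
      filter_upwards [this] with ω hω
      exact fun z₁ h1 z₂ h2 h3 => hω z₁ z₂ h1 h2 h3
    have hSa_int : Integrable (fun ω => S (J - g + 1) ω * h (X ω)) P :=
      Integrable.bdd_mul hhint (hset.hSm _).aestronglyMeasurable
        (Filter.Eventually.of_forall fun ω => by
          simpa [Real.norm_eq_abs] using hSb (J - g + 1) ω)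
    have hSb0_int : Integrable
        (fun ω => (if J - g = 0 then (0 : ℝ) else S (J - g) ω) * h (X ω)) P := by
      by_cases hb0 : J - g = 0
      · simp only [if_pos hb0]
        have e : (fun ω => (0 : ℝ) * h (X ω)) = fun _ => (0 : ℝ) := by
          funext ω; ring
        rw [e]
        exact integrable_const 0
      · simp only [if_neg hb0]
        exact Integrable.bdd_mul hhint (hset.hSm _).aestronglyMeasurable
          (Filter.Eventually.of_forall fun ω => by
            simpa [Real.norm_eq_abs] using hSb (J - g) ω)
    have hSb0_eq : ∫ ω, (if J - g = 0 then (0 : ℝ) else S (J - g) ω) * h (X ω) ∂P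
        = ∫ ω, pscore P X S J (J - g) ω * h (X ω) ∂P := by
      by_cases hb0 : J - g = 0
      · simp [pscore, hb0]
      · simp only [if_neg hb0]
        exact hSh (J - g) (by omega) hbJ
    have hsplitp : ∫ ω, (pscore P X S J (J - g + 1) ω - pscore P X S J (J - g) ω)
          * h (X ω) ∂P
        = ∫ ω, pscore P X S J (J - g + 1) ω * h (X ω) ∂P
          - ∫ ω, pscore P X S J (J - g) ω * h (X ω) ∂P := by
      rw [← integral_sub (hph_int _) (hph_int _)]
      apply integral_congr_ae
      exact Filter.Eventually.of_forall fun ω => by ring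
    rw [hsplitp, ← hSh (J - g + 1) (by omega) haJ, ← hSb0_eq, ← integral_sub hSa_int hSb0_int]
    apply integral_congr_ae
    filter_upwards [hmono_ae] with ω hω
    have hstrat := strat_indicator (by omega : 1 ≤ J) hgI.1 hgI.2
      (fun z' => hset.hS01 z' ω) hω
    rw [← hstrat]
    ring


end TruncationByDeath
end
end
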